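/- If two reduced polynomial resolutions G = (G_l,...,G_1) and G' = (G'_l,...,G'_1) of convolutional codes are equivalent via filtered-module isomorphisms U_i : S^{p_i}[-a_i] → S^{p'_i}[-a'_i] (with G'_1 U_1 = G_1, G'_{i+1} U_{i+1} = U_i G_{i+1}), then they have the same size (p_i = p'_i for all i) and the same column degree table (a_i = a'_i up to permutation, for each i). -/
import Mathlib


open MvPolynomial

noncomputable section
open scoped Classical

/-- Polynomials of total degree at most `d`. -/
def polyDegLE (F : Type) [Field F] (n : ℕ) (d : ℤ) :
    Submodule F (MvPolynomial (Fin n) F) where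
  carrier := {f | ∀ m ∈ f.support, ((m.sum fun _ e => e : ℕ) : ℤ) ≤ d}
  add_mem' := fun hf hg m hm =>
    (Finset.mem_union.1 (MvPolynomial.support_add hm)).elim (hf m) (hg m)
  zero_mem' := by simp
  smul_mem' := fun c f hf m hm => hf m (MvPolynomial.support_smul hm)

/-- The filtration `S^p[-a]_{≤ d}`. -/
def filt (F : Type) [Field F] (n p : ℕ) (a : Fin p → ℕ) (d : ℤ) :
    Submodule F (Fin p → MvPolynomial (Fin n) F) :=
  Submodule.pi Set.univ fun i => polyDegLE F n (d - a i)

/-- `C_{≤d} = C ∩ S^q_{≤d}`, as an `F`-subspace of `S^q`. -/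
def codeLE (F : Type) [Field F] (n q : ℕ)
    (C : Submodule (MvPolynomial (Fin n) F) (Fin q → MvPolynomial (Fin n) F))
    (d : ℤ) : Submodule F (Fin q → MvPolynomial (Fin n) F) :=
  (C.restrictScalars F) ⊓ filt F n q (fun _ => 0) d

/-- The `a`-degree of the `j`-th column of a matrix `G` with no zero columns:
`deg_a(G_{·j}) = max_i (a i + deg (G i j))`, the maximum ranging over the nonzero
entries of the column. -/
def colDeg {F : Type} [Field F] {n p r : ℕ} (a : Fin p → ℕ)
    (G : Matrix (Fin p) (Fin r) (MvPolynomial (Fin n) F)) (j : Fin r) : ℕ :=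
  Finset.univ.sup fun i => if G i j = 0 then 0 else a i + (G i j).totalDegree

section Aux

variable (F : Type) [Field F] (n : ℕ)

lemma polyDegLE_neg {d : ℤ} (hd : d < 0) : polyDegLE F n d = ⊥ := by
  ext f
  simp only [Submodule.mem_bot]
  constructor
  · intro hf
    have hs : f.support = ∅ := by
      rw [Finset.eq_empty_iff_forall_notMem]
      intro m hm
      have := hf m hm
      omega
    exact MvPolynomial.support_eq_empty.1 hs
  · rintro rfl m hm
    simp at hm

lemma polyDegLE_natCast (k : ℕ) :
    polyDegLE F n (k : ℤ) = restrictTotalDegree (Fin n) F k := by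
  ext f
  rw [mem_restrictTotalDegree]
  constructor
  · intro hf
    apply Finset.sup_le
    intro m hm
    exact_mod_cast hf m hm
  · intro hf m hm
    exact_mod_cast le_trans (Finset.le_sup hm) hf

instance polyDegLE_finite (d : ℤ) : Module.Finite F (polyDegLE F n d) := by
  rcases lt_or_ge d 0 with h | h
  · rw [polyDegLE_neg F n h]
    infer_instance
  · lift d to ℕ using h
    rw [polyDegLE_natCast]
    infer_instance

lemma finrank_polyDegLE_zero : Module.finrank F (polyDegLE F n 0) = 1 := by
  have h : polyDegLE F n 0 = Submodule.span F {(1 : MvPolynomial (Fin n) F)} := by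
    ext f
    rw [Submodule.mem_span_singleton]
    constructor
    · intro hf
      refine ⟨MvPolynomial.coeff 0 f, ?_⟩
      have hm0 : ∀ m ∈ f.support, m = 0 := by
        intro m hm
        have h1 := hf m hm
        have h2 : (m.sum fun _ e => e) = 0 := by omega
        rw [Finsupp.sum] at h2
        have h3 := (Finset.sum_eq_zero_iff).1 h2
        apply Finsupp.support_eq_empty.1
        rw [Finset.eq_empty_iff_forall_notMem]
        intro x hx
        exact (Finsupp.mem_support_iff.1 hx) (h3 x hx)
      have hsm : (MvPolynomial.coeff 0 f) • (1 : MvPolynomial (Fin n) F)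
          = MvPolynomial.C (MvPolynomial.coeff 0 f) := by
        rw [MvPolynomial.smul_eq_C_mul, mul_one]
      rw [hsm]
      apply MvPolynomial.ext
      intro m
      rw [MvPolynomial.coeff_C]
      split_ifs with hmz
      · rw [hmz]
      · symm
        rw [← MvPolynomial.notMem_support_iff]
        intro hm
        exact hmz ((hm0 m hm) ▸ rfl)
    · rintro ⟨c, rfl⟩ m hm
      have h1 : (c • (1 : MvPolynomial (Fin n) F)) = MvPolynomial.C c := by
        rw [MvPolynomial.smul_eq_C_mul, mul_one]
      rw [h1] at hm
      have h2 := MvPolynomial.mem_support_iff.1 hm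
      rw [MvPolynomial.coeff_C] at h2
      by_cases hmz : m = 0
      · subst hmz; simp
      · rw [if_neg (fun h => hmz h.symm)] at h2
        exact absurd rfl h2
  rw [h]
  exact finrank_span_singleton one_ne_zero

/-- The linear equivalence between `Submodule.pi Set.univ q` and the product of the `q i`. -/
def piSubEquiv {p : ℕ} {M : Type} [AddCommGroup M] [Module F M]
    (q : Fin p → Submodule F M) :
    (Submodule.pi Set.univ q) ≃ₗ[F] (∀ i, q i) where
  toFun x := fun i => ⟨x.1 i, x.2 i (Set.mem_univ i)⟩
  map_add' x y := rfl
  map_smul' c x := rfl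
  invFun y := ⟨fun i => (y i).1, fun i _ => (y i).2⟩
  left_inv x := rfl
  right_inv y := rfl

lemma finrank_filt (p : ℕ) (c : Fin p → ℕ) (d : ℤ) :
    Module.finrank F (filt F n p c d)
      = ∑ i, Module.finrank F (polyDegLE F n (d - c i)) := by
  exact (LinearEquiv.finrank_eq
      (piSubEquiv F (fun i => polyDegLE F n (d - (c i : ℤ))) :
        (filt F n p c d) ≃ₗ[F] ∀ i, (polyDegLE F n (d - (c i : ℤ))))).trans
    (Module.finrank_pi_fintype F)

end Aux

/-- Key sum-expansion: grouping the sum by the values of `c`. -/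
lemma sum_N_expand (N : ℤ → ℕ) (hN0 : N 0 = 1) (hNneg : ∀ m : ℤ, m < 0 → N m = 0)
    {q : ℕ} (c : Fin q → ℕ) (t : ℕ) :
    ∑ i, N ((t : ℤ) - c i)
      = (∑ s ∈ Finset.range t,
          (Finset.univ.filter fun i => c i = s).card * N ((t : ℤ) - s))
        + (Finset.univ.filter fun i => c i = t).card := by
  have h1 : ∑ i ∈ Finset.univ.filter (fun i => c i ≤ t), N ((t : ℤ) - c i)
      = ∑ i, N ((t : ℤ) - c i) := by
    refine Finset.sum_filter_of_ne ?_
    intro i _ hi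
    by_contra h
    exact hi (hNneg _ (by omega))
  have h2 : ∑ s ∈ Finset.range (t+1),
          ∑ i ∈ (Finset.univ.filter (fun i => c i ≤ t)).filter (fun i => c i = s),
            N ((t : ℤ) - c i)
      = ∑ i ∈ Finset.univ.filter (fun i => c i ≤ t), N ((t : ℤ) - c i) := by
    refine Finset.sum_fiberwise_of_maps_to ?_ _
    intro i hi
    simp only [Finset.mem_filter] at hi
    exact Finset.mem_range.2 (by omega)
  have h3 : ∀ s ∈ Finset.range (t+1),
      ∑ i ∈ (Finset.univ.filter (fun i => c i ≤ t)).filter (fun i => c i = s),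
        N ((t : ℤ) - c i)
      = (Finset.univ.filter fun i => c i = s).card * N ((t : ℤ) - s) := by
    intro s hs
    rw [Finset.mem_range] at hs
    rw [Finset.filter_filter]
    rw [Finset.sum_congr rfl (fun i hi => by
      simp only [Finset.mem_filter] at hi
      rw [hi.2.2])]
    have hset : (Finset.univ.filter fun i => c i ≤ t ∧ c i = s)
        = Finset.univ.filter fun i => c i = s := by
      apply Finset.filter_congr
      intro i _
      constructor
      · exact And.right
      · intro h
        exact ⟨by omega, h⟩
    rw [hset, Finset.sum_const, smul_eq_mul]
  calc ∑ i, N ((t : ℤ) - c i)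
      = ∑ s ∈ Finset.range (t+1),
          (Finset.univ.filter fun i => c i = s).card * N ((t : ℤ) - s) := by
        rw [← h1, ← h2]
        exact Finset.sum_congr rfl h3
    _ = _ := by
        rw [Finset.sum_range_succ]
        congr 1
        rw [show ((t : ℤ) - t) = 0 by ring, hN0, mul_one]

/-- The multiplicity-counting lemma. -/
lemma count_eq_of_sum_eq (N : ℤ → ℕ) (hN0 : N 0 = 1) (hNneg : ∀ m : ℤ, m < 0 → N m = 0)
    {p p' : ℕ} (c : Fin p → ℕ) (c' : Fin p' → ℕ)
    (H : ∀ d : ℤ, ∑ i, N (d - c i) = ∑ i, N (d - c' i)) :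
    ∀ t : ℕ, (Finset.univ.filter fun i => c i = t).card
      = (Finset.univ.filter fun i => c' i = t).card := by
  intro t
  induction t using Nat.strong_induction_on with
  | _ t IH =>
    have key := H (t : ℤ)
    rw [sum_N_expand N hN0 hNneg c t, sum_N_expand N hN0 hNneg c' t] at key
    have hsum : ∑ s ∈ Finset.range t,
          (Finset.univ.filter fun i => c i = s).card * N ((t : ℤ) - s)
        = ∑ s ∈ Finset.range t,
          (Finset.univ.filter fun i => c' i = s).card * N ((t : ℤ) - s) := by
      refine Finset.sum_congr rfl ?_
      intro s hs
      rw [IH s (Finset.mem_range.1 hs)]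
    omega

/-- if two polynomial resolutions `(G_l,…,G_1)` and `(G'_l,…,G'_1)`
(with column degree tables `(a_l,…,a_1)`, `(a'_l,…,a'_1)` and no zero columns) are
equivalent via filtered-module isomorphisms `U_i : S^{p_i}[-a_i] ≅ S^{p'_i}[-a'_i]`
satisfying `G'_1 U_1 = G_1` and `G'_{i+1} U_{i+1} = U_i G_{i+1}`, then they have the
same size (`p_i = p'_i`) and the same column degree table (`a_i = a'_i` up to a
permutation, for each `i`). -/
theorem equivalent_resolutions_same_size_and_degrees (F : Type) [Field F] (n : ℕ)
    (l : ℕ) (hl : 1 ≤ l) (p p' : ℕ → ℕ) (h0 : p' 0 = p 0)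
    (G : ∀ i : ℕ, Matrix (Fin (p i)) (Fin (p (i+1))) (MvPolynomial (Fin n) F))
    (G' : ∀ i : ℕ, Matrix (Fin (p' i)) (Fin (p' (i+1))) (MvPolynomial (Fin n) F))
    (a : ∀ i : ℕ, Fin (p i) → ℕ) (a' : ∀ i : ℕ, Fin (p' i) → ℕ)
    (ha0 : ∀ j, a 0 j = 0) (ha0' : ∀ j, a' 0 j = 0)
    (harec : ∀ i, i + 1 ≤ l → ∀ j, a (i+1) j = colDeg (a i) (G i) j)
    (harec' : ∀ i, i + 1 ≤ l → ∀ j, a' (i+1) j = colDeg (a' i) (G' i) j)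
    (hnz : ∀ i, i + 1 ≤ l → ∀ j, ∃ r, G i r j ≠ 0)
    (hnz' : ∀ i, i + 1 ≤ l → ∀ j, ∃ r, G' i r j ≠ 0)
    (hcomplex : ∀ i, i + 2 ≤ l → ∀ y, (G i).mulVec ((G (i+1)).mulVec y) = 0)
    (hcomplex' : ∀ i, i + 2 ≤ l → ∀ y, (G' i).mulVec ((G' (i+1)).mulVec y) = 0)
    -- the equivalence: filtered isomorphisms `U_i`, `i = 1, …, l`
    (U : ∀ i : ℕ, i + 1 ≤ l →
      ((Fin (p (i+1)) → MvPolynomial (Fin n) F) ≃ₗ[MvPolynomial (Fin n) F]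
        (Fin (p' (i+1)) → MvPolynomial (Fin n) F)))
    (hUfilt : ∀ i (h : i + 1 ≤ l) (d : ℤ),
      ∀ f ∈ filt F n (p (i+1)) (a (i+1)) d,
        U i h f ∈ filt F n (p' (i+1)) (a' (i+1)) d)
    (hUfilt' : ∀ i (h : i + 1 ≤ l) (d : ℤ),
      ∀ g ∈ filt F n (p' (i+1)) (a' (i+1)) d,
        (U i h).symm g ∈ filt F n (p (i+1)) (a (i+1)) d)
    -- intertwining: `G'_1 U_1 = G_1`
    (hU1 : ∀ (h : 1 ≤ l) (f : Fin (p 1) → MvPolynomial (Fin n) F) (r : Fin (p' 0)),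
      (G' 0).mulVec (U 0 h f) r = (G 0).mulVec f (Fin.cast h0 r))
    -- intertwining: `G'_{i+1} U_{i+1} = U_i G_{i+1}`
    (hUrec : ∀ i (h : i + 2 ≤ l) (f : Fin (p (i+2)) → MvPolynomial (Fin n) F),
      (G' (i+1)).mulVec (U (i+1) h f) =
        U i (by omega) ((G (i+1)).mulVec f)) :
    ∀ i, i + 1 ≤ l →
      p (i+1) = p' (i+1) ∧
      ∃ σ : Fin (p (i+1)) ≃ Fin (p' (i+1)), ∀ j, a' (i+1) (σ j) = a (i+1) j := by
  intro i hi
  classical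
  set S := MvPolynomial (Fin n) F
  -- finrank equality of filtration pieces
  have hfr : ∀ d : ℤ,
      Module.finrank F (filt F n (p (i+1)) (a (i+1)) d)
        = Module.finrank F (filt F n (p' (i+1)) (a' (i+1)) d) := by
    intro d
    have hmap : (filt F n (p (i+1)) (a (i+1)) d).map
        (((U i hi).restrictScalars F : _ →ₗ[F] _))
        = filt F n (p' (i+1)) (a' (i+1)) d := by
      apply le_antisymm
      · rintro _ ⟨f, hf, rfl⟩
        exact hUfilt i hi d f hf
      · intro g hg
        exact ⟨(U i hi).symm g, hUfilt' i hi d g hg, (U i hi).apply_symm_apply g⟩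
    exact LinearEquiv.finrank_eq
      (LinearEquiv.ofSubmodules ((U i hi).restrictScalars F) _ _ hmap)
  -- translate into sums of N
  set N : ℤ → ℕ := fun m => Module.finrank F (polyDegLE F n m) with hN
  have hN0 : N 0 = 1 := finrank_polyDegLE_zero F n
  have hNneg : ∀ m : ℤ, m < 0 → N m = 0 := by
    intro m hm
    rw [hN]
    simp only
    rw [polyDegLE_neg F n hm, finrank_bot]
  have Hsum : ∀ d : ℤ, ∑ j, N (d - a (i+1) j) = ∑ j, N (d - a' (i+1) j) := by
    intro d
    have := hfr d
    rwa [finrank_filt, finrank_filt] at this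
  have hcount := count_eq_of_sum_eq N hN0 hNneg (a (i+1)) (a' (i+1)) Hsum
  -- build the bijection
  have hcard : ∀ t : ℕ, Fintype.card {j // a (i+1) j = t}
      = Fintype.card {j // a' (i+1) j = t} := by
    intro t
    rw [Fintype.card_subtype, Fintype.card_subtype, hcount t]
  let e : ∀ t : ℕ, {j // a (i+1) j = t} ≃ {j // a' (i+1) j = t} :=
    fun t => Fintype.equivOfCardEq (hcard t)
  refine ⟨?_, Equiv.ofFiberEquiv e, fun j => Equiv.ofFiberEquiv_map e j⟩
  have := Fintype.card_congr (Equiv.ofFiberEquiv e)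
  simpa using this
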